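/- Let w be a word over a linearly ordered alphabet such that w is a Lyndon word (w is lexicographically strictly smaller than each of its nonempty proper suffixes). If w = uv where v is the longest proper nonempty suffix of w that is itself a Lyndon word, then u is also a Lyndon word. -/

import Mathlib

/-- A word is a Lyndon word if it is nonempty and lexicographically strictly
smaller than all of its nonempty proper suffixes. -/
def IsLyndon {α : Type*} [LinearOrder α] (w : List α) : Prop :=
  w ≠ [] ∧ ∀ u v : List α, w = u ++ v → u ≠ [] → v ≠ [] → w < v

section Aux

variable {α : Type*} [LinearOrder α]

lemma lex_append_left_cancel : ∀ (s : List α) {t t' : List α}, s ++ t < s ++ t' → t < t'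
  | [], _, _, h => h
  | a :: s, t, t', h => by
    have h' : List.Lex (· < ·) (a :: (s ++ t)) (a :: (s ++ t')) := h
    exact lex_append_left_cancel s (((List.cons_lex_cons_iff.mp h').resolve_left (lt_irrefl a)).2)

lemma lex_or_prefix' {b u : List α} (h : List.Lex (· < ·) b u) :
    (∀ s t : List α, List.Lex (· < ·) (b ++ s) (u ++ t)) ∨ b <+: u := by
  induction h with
  | nil => exact Or.inr (List.nil_prefix)
  | @cons a l₁ l₂ hlex ih =>
    rcases ih with h1 | h2
    · exact Or.inl fun s t => List.Lex.cons (h1 s t)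
    · exact Or.inr (List.cons_prefix_cons.mpr ⟨rfl, h2⟩)
  | @rel a₁ l₁ a₂ l₂ hrel => exact Or.inl fun s t => List.Lex.rel hrel

lemma lex_or_prefix {b u : List α} (h : b < u) :
    (∀ s t : List α, b ++ s < u ++ t) ∨ b <+: u :=
  lex_or_prefix' h

lemma key_no_small_suffix {w v : List α} (hw : IsLyndon w) (hvL : IsLyndon v)
    (hlongest : ∀ v' : List α, v' <:+ w → v' ≠ [] → v' ≠ w → IsLyndon v' →
      v'.length ≤ v.length) :
    ∀ n (c : List α), c.length ≤ n → c ≠ [] → (c ++ v) <:+ w →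
      (c ++ v).length < w.length → ¬ (c ++ v < v) := by
  intro n
  induction n with
  | zero =>
    intro c hc hne
    exact absurd (List.length_eq_zero_iff.mp (Nat.le_zero.mp hc)) hne
  | succ n ih =>
    intro c hcn hcne hsuf hlen hlt
    have hcvne : (c ++ v : List α) ≠ [] := by
      simp [hcne]
    have hne_w : c ++ v ≠ w := fun h => by rw [h] at hlen; omega
    have hnotL : ¬ IsLyndon (c ++ v) := by
      intro hL
      have h1 := hlongest _ hsuf hcvne hne_w hL
      rw [List.length_append] at h1
      exact hcne (List.length_eq_zero_iff.mp (by omega))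
    rw [IsLyndon] at hnotL
    push_neg at hnotL
    obtain ⟨x, z, hxz, hx, hz, hzle⟩ := hnotL hcvne
    have hzle' : z ≤ c ++ v := hzle
    have hzsuf_cv : z <:+ c ++ v := ⟨x, hxz.symm⟩
    have hvsuf_cv : v <:+ c ++ v := ⟨c, rfl⟩
    rcases le_or_gt z.length v.length with hl | hl
    · have hzv : z <:+ v := List.suffix_of_suffix_length_le hzsuf_cv hvsuf_cv hl
      rcases eq_or_ne z v with rfl | hne
      · exact absurd (lt_of_le_of_lt hzle' hlt) (lt_irrefl _)
      · obtain ⟨p, hp⟩ := hzv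
        have hpne : p ≠ [] := by rintro rfl; exact hne hp
        have hv_lt : v < z := hvL.2 p z hp.symm hpne hz
        exact absurd (lt_trans hv_lt (lt_of_le_of_lt hzle' hlt)) (lt_irrefl _)
    · have hvz : v <:+ z := List.suffix_of_suffix_length_le hvsuf_cv hzsuf_cv hl.le
      obtain ⟨c', hc'⟩ := hvz
      have hc'ne : c' ≠ [] := by
        rintro rfl
        rw [List.nil_append] at hc'
        rw [hc'] at hl
        omega
      have hcx : c = x ++ c' := by
        have h2 : c ++ v = (x ++ c') ++ v := by rw [List.append_assoc, hc', hxz]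
        exact List.append_cancel_right h2
      have hxlen : 0 < x.length := List.length_pos_iff.mpr hx
      have hlen' : c'.length ≤ n := by
        rw [hcx, List.length_append] at hcn
        omega
      have hsuf' : (c' ++ v) <:+ w := by
        rw [hc']
        exact hzsuf_cv.trans hsuf
      have hlz : z.length < (c ++ v).length := by
        rw [hxz, List.length_append]
        omega
      have hlenz : (c' ++ v).length < w.length := by
        rw [hc']
        omega
      have hlt' : c' ++ v < v := by
        rw [hc']
        exact lt_of_le_of_lt hzle' hlt
      exact ih c' hlen' hc'ne hsuf' hlenz hlt'

end Aux

/-- In the standard factorization `w = uv` of a Lyndon word `w` (with `v` the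
longest proper nonempty Lyndon suffix), the word `u` is also a Lyndon word. -/
theorem std_fact_left_lyndon {α : Type*} [LinearOrder α] (w u v : List α)
    (hw : IsLyndon w) (hsplit : w = u ++ v) (hu : u ≠ []) (hv : v ≠ [])
    (hvL : IsLyndon v)
    (hlongest : ∀ v' : List α, v' <:+ w → v' ≠ [] → v' ≠ w → IsLyndon v' →
      v'.length ≤ v.length) :
    IsLyndon u := by
  refine ⟨hu, ?_⟩
  intro a b hab ha hb
  by_contra hlt
  have hble : b ≤ u := le_of_not_gt hlt
  have hblen : b.length < u.length := by
    rw [hab, List.length_append]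
    have := List.length_pos_iff.mpr ha
    omega
  have hbu : b < u := lt_of_le_of_ne hble (fun h => by rw [h] at hblen; omega)
  have hwbv : w < b ++ v :=
    hw.2 a (b ++ v) (by rw [hsplit, hab, List.append_assoc]) ha (by simp [hb])
  rcases lex_or_prefix hbu with hcase | hpre
  · have h1 : b ++ v < u ++ v := hcase v v
    rw [← hsplit] at h1
    exact absurd hwbv (lt_asymm h1)
  · obtain ⟨c, hc⟩ := hpre
    have hcne : c ≠ [] := by
      rintro rfl
      rw [List.append_nil] at hc
      rw [hc] at hblen
      omega
    have hcv : c ++ v < v := by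
      apply lex_append_left_cancel b
      have : w = b ++ (c ++ v) := by rw [hsplit, ← hc, List.append_assoc]
      rw [← this]
      exact hwbv
    have hsuf : (c ++ v) <:+ w := ⟨b, by rw [hsplit, ← hc, List.append_assoc]⟩
    have hblen0 : 0 < b.length := List.length_pos_iff.mpr hb
    have hlen : (c ++ v).length < w.length := by
      rw [hsplit, ← hc]
      simp [List.length_append]
      omega
    exact key_no_small_suffix hw hvL hlongest c.length c le_rfl hcne hsuf hlen hcv
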